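/- Let 0 < p < 1 and λ ∈ [0,1]. The map (A, B, C) ↦ C^{1/2} (C^{-1/2}(λA + (1-λ)B)C^{-1/2})^{-p} C^{1/2} is jointly convex on triples of n×n positive definite complex matrices: for positive definite triples (A₁,B₁,C₁), (A₂,B₂,C₂) and α ∈ [0,1], with (A,B,C) = α(A₁,B₁,C₁) + (1-α)(A₂,B₂,C₂) taken entrywise, C^{1/2}(C^{-1/2}(λA+(1-λ)B)C^{-1/2})^{-p} C^{1/2} ≤ α C₁^{1/2}(C₁^{-1/2}(λA₁+(1-λ)B₁)C₁^{-1/2})^{-p} C₁^{1/2} + (1-α) C₂^{1/2}(C₂^{-1/2}(λA₂+(1-λ)B₂)C₂^{-1/2})^{-p} C₂^{1/2} in the Loewner order. -/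

import Mathlib

open Matrix
open scoped ComplexOrder

/-- Matrix power by a real exponent via the functional calculus
(unitary diagonalization for Hermitian matrices; junk value otherwise). -/
noncomputable def mpow {n : ℕ} (A : Matrix (Fin n) (Fin n) ℂ) (q : ℝ) :
    Matrix (Fin n) (Fin n) ℂ :=
  if hA : A.IsHermitian then
    (hA.eigenvectorUnitary : Matrix (Fin n) (Fin n) ℂ) *
      Matrix.diagonal (fun i => ((hA.eigenvalues i ^ q : ℝ) : ℂ)) *
      (star (hA.eigenvectorUnitary : Matrix (Fin n) (Fin n) ℂ))
  else 0

/-- The perspective map `(A,B,C) ↦ C^{1/2} (C^{-1/2}(λA + (1-λ)B)C^{-1/2})^{-p} C^{1/2}`. -/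
noncomputable def persp {n : ℕ} (lam p : ℝ) (A B C : Matrix (Fin n) (Fin n) ℂ) :
    Matrix (Fin n) (Fin n) ℂ :=
  mpow C (1 / 2) *
    mpow (mpow C (-(1 / 2)) * (lam • A + (1 - lam) • B) * mpow C (-(1 / 2))) (-p) *
      mpow C (1 / 2)

section Aux

open MeasureTheory Set Real

variable {n : ℕ}

noncomputable def Jc (p : ℝ) : ℝ := ∫ s in Ioi (0:ℝ), s ^ (-p) / (1 + s)

lemma intOn_aux {p x : ℝ} (hp0 : 0 < p) (hp1 : p < 1) (hx : 0 < x) :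
    IntegrableOn (fun t => t ^ (-p) / (x + t)) (Ioi (0:ℝ)) := by
  have hmeas : ∀ s : Set ℝ, s ⊆ Ioi 0 → MeasurableSet s →
      AEStronglyMeasurable (fun t : ℝ => t ^ (-p) / (x + t)) (volume.restrict s) := by
    intro s hs hms
    refine ContinuousOn.aestronglyMeasurable ?_ hms
    refine ContinuousOn.div ?_ (by fun_prop) ?_
    · exact fun t ht =>
        (Real.continuousAt_rpow_const t (-p) (Or.inl (ne_of_gt (hs ht)))).continuousWithinAt
    · intro t ht; have := hs ht; rw [mem_Ioi] at this; positivity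
  have h1 : IntegrableOn (fun t => t ^ (-p) / (x + t)) (Ioc (0:ℝ) 1) := by
    have hint : IntegrableOn (fun t : ℝ => t ^ (-p) / x) (Ioc (0:ℝ) 1) := by
      refine Integrable.div_const ?_ _
      have := (intervalIntegral.intervalIntegrable_rpow' (a := 0) (b := 1) (r := -p)
        (by linarith)).1
      exact this
    refine Integrable.mono' hint (hmeas _ Ioc_subset_Ioi_self measurableSet_Ioc) ?_
    filter_upwards [ae_restrict_mem measurableSet_Ioc] with t ht
    obtain ⟨ht1, ht2⟩ := ht
    rw [norm_div, norm_of_nonneg (rpow_nonneg ht1.le _), norm_of_nonneg (by positivity)]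
    exact div_le_div_of_nonneg_left (rpow_nonneg ht1.le _) hx (by linarith)
  have h2 : IntegrableOn (fun t => t ^ (-p) / (x + t)) (Ioi (1:ℝ)) := by
    have hint : IntegrableOn (fun t : ℝ => t ^ (-(p+1))) (Ioi (1:ℝ)) :=
      integrableOn_Ioi_rpow_of_lt (by linarith) one_pos
    refine Integrable.mono' hint (hmeas _ (Ioi_subset_Ioi zero_le_one) measurableSet_Ioi) ?_
    filter_upwards [ae_restrict_mem measurableSet_Ioi] with t ht
    have ht0 : (0:ℝ) < t := lt_trans one_pos ht
    rw [norm_div, norm_of_nonneg (rpow_nonneg ht0.le _), norm_of_nonneg (by positivity)]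
    have heq : t ^ (-(p+1)) = t ^ (-p) / t := by
      rw [div_eq_mul_inv, ← Real.rpow_neg_one t, ← Real.rpow_add ht0]
      congr 1; ring
    rw [heq]
    exact div_le_div_of_nonneg_left (rpow_nonneg ht0.le _) ht0 (by linarith)
  have : Ioi (0:ℝ) = Ioc 0 1 ∪ Ioi 1 := (Ioc_union_Ioi_eq_Ioi zero_le_one).symm
  rw [this]
  exact h1.union h2

lemma Jc_pos {p : ℝ} (hp0 : 0 < p) (hp1 : p < 1) : 0 < Jc p := by
  rw [Jc]
  rw [setIntegral_pos_iff_support_of_nonneg_ae ?_ (intOn_aux hp0 hp1 one_pos)]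
  · have hsub : Ioi (0:ℝ) ⊆ Function.support (fun s : ℝ => s ^ (-p) / (1 + s)) ∩ Ioi 0 := by
      intro s hs
      have hs' := mem_Ioi.mp hs
      refine ⟨ne_of_gt (div_pos (rpow_pos_of_pos hs' _) (by linarith)), hs⟩
    calc (0:ENNReal) < volume (Ioi (0:ℝ)) := by simp
    _ ≤ _ := measure_mono hsub
  · filter_upwards [ae_restrict_mem measurableSet_Ioi] with s hs
    have hs' := mem_Ioi.mp hs
    positivity

lemma integral_aux_eq {p x : ℝ} (hp0 : 0 < p) (hp1 : p < 1) (hx : 0 < x) :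
    ∫ t in Ioi (0:ℝ), t ^ (-p) / (x + t) = x ^ (-p) * Jc p := by
  have h := MeasureTheory.integral_comp_mul_left_Ioi (fun t => t ^ (-p) / (x + t)) 0 hx
  simp only [mul_zero, smul_eq_mul] at h
  have h2 : ∫ s in Ioi (0:ℝ), (x*s) ^ (-p) / (x + x*s)
      = ∫ s in Ioi (0:ℝ), x ^ (-p) * x⁻¹ * (s ^ (-p) / (1 + s)) := by
    refine setIntegral_congr_fun measurableSet_Ioi fun s hs => ?_
    have hs0 : (0:ℝ) < s := hs
    rw [Real.mul_rpow hx.le hs0.le]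
    have hxx : x + x * s = x * (1 + s) := by ring
    rw [hxx]
    field_simp
  rw [h2, integral_const_mul] at h
  have key : ∫ t in Ioi (0:ℝ), t ^ (-p) / (x + t) = x * (x ^ (-p) * x⁻¹ * Jc p) := by
    rw [Jc, h]
    field_simp
  rw [key]
  field_simp




lemma isHermitian_UDU (U : Matrix (Fin n) (Fin n) ℂ) (c : Fin n → ℝ) :
    (U * Matrix.diagonal (fun i => (c i : ℂ)) * star U).IsHermitian := by
  have h : (U * Matrix.diagonal (fun i => (c i : ℂ)) * star U)
      = (star U)ᴴ * Matrix.diagonal (fun i => (c i : ℂ)) * star U := by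
    rw [star_eq_conjTranspose, conjTranspose_conjTranspose]
  rw [h]
  exact isHermitian_conjTranspose_mul_mul _ (isHermitian_diagonal_iff.mpr
    fun i => Complex.conj_ofReal _)

lemma UDU_mul {U : Matrix (Fin n) (Fin n) ℂ} (hU : U ∈ Matrix.unitaryGroup (Fin n) ℂ)
    (d e : Fin n → ℂ) :
    (U * Matrix.diagonal d * star U) * (U * Matrix.diagonal e * star U)
      = U * Matrix.diagonal (fun i => d i * e i) * star U := by
  have h1 : star U * U = 1 := Matrix.mem_unitaryGroup_iff'.mp hU
  calc (U * Matrix.diagonal d * star U) * (U * Matrix.diagonal e * star U)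
      = U * Matrix.diagonal d * (star U * U) * Matrix.diagonal e * star U := by
        simp only [Matrix.mul_assoc]
    _ = U * (Matrix.diagonal d * Matrix.diagonal e) * star U := by
        rw [h1]; simp only [Matrix.mul_assoc, Matrix.one_mul]
    _ = _ := by rw [Matrix.diagonal_mul_diagonal]

lemma qf_UDU (U : Matrix (Fin n) (Fin n) ℂ) (c : Fin n → ℝ) (v : Fin n → ℂ) :
    star v ⬝ᵥ ((U * Matrix.diagonal (fun i => (c i : ℂ)) * star U) *ᵥ v)
      = ((∑ i, c i * Complex.normSq ((star U *ᵥ v) i) : ℝ) : ℂ) := by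
  set u := star U *ᵥ v with hu
  have h1 : (U * Matrix.diagonal (fun i => (c i : ℂ)) * star U) *ᵥ v
      = U *ᵥ (Matrix.diagonal (fun i => (c i : ℂ)) *ᵥ u) := by
    rw [hu, Matrix.mulVec_mulVec, Matrix.mulVec_mulVec]
  rw [h1, Matrix.dotProduct_mulVec]
  have h2 : star v ᵥ* U = star u := by
    rw [hu, Matrix.star_mulVec, star_eq_conjTranspose, conjTranspose_conjTranspose]
  rw [h2]
  rw [dotProduct]
  push_cast
  refine Finset.sum_congr rfl fun i _ => ?_
  rw [Matrix.mulVec_diagonal]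
  simp only [Pi.star_apply]
  rw [Complex.star_def, mul_comm ((c i : ℂ)) (u i), ← mul_assoc, ← Complex.normSq_eq_conj_mul_self]
  ring


lemma mpow_eq {A : Matrix (Fin n) (Fin n) ℂ} (hA : A.IsHermitian) (q : ℝ) :
    mpow A q = (hA.eigenvectorUnitary : Matrix (Fin n) (Fin n) ℂ) *
      Matrix.diagonal (fun i => ((hA.eigenvalues i ^ q : ℝ) : ℂ)) *
      (star (hA.eigenvectorUnitary : Matrix (Fin n) (Fin n) ℂ)) := by
  rw [mpow, dif_pos hA]

lemma mpow_isHermitian (A : Matrix (Fin n) (Fin n) ℂ) (q : ℝ) : (mpow A q).IsHermitian := by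
  by_cases hA : A.IsHermitian
  · rw [mpow_eq hA]; exact isHermitian_UDU _ _
  · rw [mpow, dif_neg hA]; exact isHermitian_zero

lemma mpow_mul_mpow {A : Matrix (Fin n) (Fin n) ℂ} (hA : A.PosDef) (q r : ℝ) :
    mpow A q * mpow A r = mpow A (q + r) := by
  rw [mpow_eq hA.1, mpow_eq hA.1, mpow_eq hA.1, UDU_mul (hA.1.eigenvectorUnitary).2]
  have hfun : (fun i => ((hA.1.eigenvalues i ^ q : ℝ) : ℂ) * ((hA.1.eigenvalues i ^ r : ℝ) : ℂ))
      = fun i => ((hA.1.eigenvalues i ^ (q + r) : ℝ) : ℂ) := by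
    funext i
    rw [← Complex.ofReal_mul, ← Real.rpow_add (hA.eigenvalues_pos i)]
  rw [hfun]

lemma mpow_zero {A : Matrix (Fin n) (Fin n) ℂ} (hA : A.IsHermitian) : mpow A 0 = 1 := by
  rw [mpow_eq hA]
  simp only [Real.rpow_zero, Complex.ofReal_one, Matrix.diagonal_one, Matrix.mul_one]
  exact Matrix.mem_unitaryGroup_iff.mp (hA.eigenvectorUnitary).2

lemma mpow_one {A : Matrix (Fin n) (Fin n) ℂ} (hA : A.IsHermitian) : mpow A 1 = A := by
  rw [mpow_eq hA]
  simp only [Real.rpow_one]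
  exact (hA.spectral_theorem).symm

lemma mpow_half_mul_half {A : Matrix (Fin n) (Fin n) ℂ} (hA : A.PosDef) :
    mpow A (1/2) * mpow A (1/2) = A := by
  rw [mpow_mul_mpow hA]
  norm_num
  exact mpow_one hA.1

lemma mpow_half_mul_neg_half {A : Matrix (Fin n) (Fin n) ℂ} (hA : A.PosDef) :
    mpow A (1/2) * mpow A (-(1/2)) = 1 := by
  rw [mpow_mul_mpow hA]
  norm_num
  exact mpow_zero hA.1

lemma mpow_neg_half_mul_half {A : Matrix (Fin n) (Fin n) ℂ} (hA : A.PosDef) :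
    mpow A (-(1/2)) * mpow A (1/2) = 1 := by
  rw [mpow_mul_mpow hA]
  norm_num
  exact mpow_zero hA.1

/-- quadratic form of `mpow` of a positive definite matrix -/
lemma qf_mpow {A : Matrix (Fin n) (Fin n) ℂ} (hA : A.PosDef) (q : ℝ) (v : Fin n → ℂ) :
    star v ⬝ᵥ (mpow A q *ᵥ v)
      = ((∑ i, (hA.1.eigenvalues i) ^ q *
          Complex.normSq ((star (hA.1.eigenvectorUnitary : Matrix (Fin n) (Fin n) ℂ) *ᵥ v) i) : ℝ) : ℂ) := by
  rw [mpow_eq hA.1, qf_UDU]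

/-- resolvent: `(A + t•1)⁻¹` via the spectral decomposition. -/
lemma resolvent_eq {A : Matrix (Fin n) (Fin n) ℂ} (hA : A.PosDef) {t : ℝ} (ht : 0 < t) :
    (A + t • (1 : Matrix (Fin n) (Fin n) ℂ))⁻¹
      = (hA.1.eigenvectorUnitary : Matrix (Fin n) (Fin n) ℂ) *
        Matrix.diagonal (fun i => (((hA.1.eigenvalues i + t)⁻¹ : ℝ) : ℂ)) *
        (star (hA.1.eigenvectorUnitary : Matrix (Fin n) (Fin n) ℂ)) := by
  set U : Matrix (Fin n) (Fin n) ℂ := (hA.1.eigenvectorUnitary : Matrix (Fin n) (Fin n) ℂ) with hU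
  have hUU : U * star U = 1 := Matrix.mem_unitaryGroup_iff.mp (hA.1.eigenvectorUnitary).2
  have hsum : A + t • (1 : Matrix (Fin n) (Fin n) ℂ)
      = U * Matrix.diagonal (fun i => ((hA.1.eigenvalues i + t : ℝ) : ℂ)) * star U := by
    have h1 : t • (1 : Matrix (Fin n) (Fin n) ℂ)
        = U * Matrix.diagonal (fun _ => ((t:ℝ):ℂ)) * star U := by
      have hd : Matrix.diagonal (fun _ : Fin n => ((t:ℝ):ℂ)) = (t:ℂ) • 1 := by
        ext i j
        by_cases h : i = j <;>
          simp [Matrix.diagonal_apply, Matrix.one_apply, h]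
      rw [hd]
      rw [Matrix.mul_smul, Matrix.smul_mul, Matrix.mul_one, hUU]
      ext i j
      simp [Complex.real_smul]
    calc A + t • (1 : Matrix (Fin n) (Fin n) ℂ)
        = U * Matrix.diagonal (fun i => ((hA.1.eigenvalues i : ℝ) : ℂ)) * star U
          + U * Matrix.diagonal (fun _ => ((t:ℝ):ℂ)) * star U := by
          rw [← h1]; congr 1; exact hA.1.spectral_theorem
      _ = _ := by
          rw [← Matrix.add_mul, ← Matrix.mul_add, Matrix.diagonal_add]
          push_cast
          rfl
  rw [hsum]
  apply Matrix.inv_eq_right_inv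
  rw [UDU_mul (hA.1.eigenvectorUnitary).2]
  have hfun : (fun i => ((hA.1.eigenvalues i + t : ℝ) : ℂ) * (((hA.1.eigenvalues i + t)⁻¹ : ℝ) : ℂ))
      = fun _ => (1:ℂ) := by
    funext i
    have hl := hA.eigenvalues_pos i
    rw [← Complex.ofReal_mul,
      mul_inv_cancel₀ (by linarith : (hA.1.eigenvalues i + t) ≠ (0:ℝ))]
    norm_num
  rw [hfun]
  have : Matrix.diagonal (fun _ : Fin n => (1:ℂ)) = 1 := Matrix.diagonal_one
  rw [this, Matrix.mul_one, hUU]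

lemma qf_conj {B N : Matrix (Fin n) (Fin n) ℂ} (hB : B.IsHermitian) (x : Fin n → ℂ) :
    star x ⬝ᵥ ((B * N * B) *ᵥ x) = star (B *ᵥ x) ⬝ᵥ (N *ᵥ (B *ᵥ x)) := by
  rw [← Matrix.mulVec_mulVec, ← Matrix.mulVec_mulVec, Matrix.dotProduct_mulVec (star x) B,
    Matrix.star_mulVec, hB.eq, Matrix.dotProduct_mulVec (star x ᵥ* B)]

lemma smul_posSemidef {m : Type*} [Fintype m] {c : ℝ} (hc : 0 ≤ c) {M : Matrix m m ℂ}
    (hM : M.PosSemidef) : (c • M).PosSemidef := by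
  rw [Matrix.posSemidef_iff_dotProduct_mulVec]
  constructor
  · rw [Matrix.IsHermitian, Matrix.conjTranspose_smul, star_trivial, hM.1.eq]
  · intro x
    rw [Matrix.smul_mulVec, dotProduct_smul]
    have h := hM.dotProduct_mulVec_nonneg x
    rw [Complex.le_def] at h ⊢
    constructor
    · simp only [Complex.smul_re, Complex.zero_re]
      exact mul_nonneg hc (by simpa using h.1)
    · simp only [Complex.smul_im, Complex.zero_im]
      rw [← h.2]; simp

lemma smul_posDef {c : ℝ} (hc : 0 < c) {M : Matrix (Fin n) (Fin n) ℂ}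
    (hM : M.PosDef) : (c • M).PosDef := by
  rw [Matrix.posDef_iff_dotProduct_mulVec]
  constructor
  · rw [Matrix.IsHermitian, Matrix.conjTranspose_smul, star_trivial, hM.1.eq]
  · intro x hx
    rw [Matrix.smul_mulVec, dotProduct_smul]
    have h := hM.dotProduct_mulVec_pos hx
    rw [Complex.lt_def] at h ⊢
    constructor
    · simp only [Complex.smul_re, Complex.zero_re]
      exact mul_pos hc (by simpa using h.1)
    · simp only [Complex.smul_im, Complex.zero_im]
      rw [← h.2]; simp

lemma combo_posDef {α : ℝ} (hα0 : 0 ≤ α) (hα1 : α ≤ 1)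
    {M₁ M₂ : Matrix (Fin n) (Fin n) ℂ} (h1 : M₁.PosDef) (h2 : M₂.PosDef) :
    (α • M₁ + (1 - α) • M₂).PosDef := by
  rcases eq_or_lt_of_le hα1 with h | h
  · subst h
    simp only [sub_self, zero_smul, add_zero, one_smul]
    simpa using smul_posDef one_pos h1
  · exact Matrix.PosDef.posSemidef_add (smul_posSemidef hα0 h1.posSemidef)
      (smul_posDef (by linarith) h2)

lemma combo_isHermitian {α β : ℝ} {M₁ M₂ : Matrix (Fin n) (Fin n) ℂ}
    (h1 : M₁.IsHermitian) (h2 : M₂.IsHermitian) :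
    (α • M₁ + β • M₂).IsHermitian := by
  rw [Matrix.IsHermitian, Matrix.conjTranspose_add, Matrix.conjTranspose_smul,
    Matrix.conjTranspose_smul, star_trivial, star_trivial, h1.eq, h2.eq]

/-- Schur complement convexity step. -/
lemma schur_step {α : ℝ} (hα0 : 0 ≤ α) (hα1 : α ≤ 1)
    {N₁ N₂ C₁ C₂ : Matrix (Fin n) (Fin n) ℂ}
    (hN₁ : N₁.PosDef) (hN₂ : N₂.PosDef) (hC₁ : C₁.IsHermitian) (hC₂ : C₂.IsHermitian) :
    ((α • (C₁ * N₁⁻¹ * C₁) + (1 - α) • (C₂ * N₂⁻¹ * C₂)) -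
      (α • C₁ + (1 - α) • C₂) * (α • N₁ + (1 - α) • N₂)⁻¹ *
        (α • C₁ + (1 - α) • C₂)).PosSemidef := by
  haveI := hN₁.isUnit.invertible
  haveI := hN₂.isUnit.invertible
  have hN : (α • N₁ + (1 - α) • N₂).PosDef := combo_posDef hα0 hα1 hN₁ hN₂
  haveI := hN.isUnit.invertible
  have h1 : (Matrix.fromBlocks N₁ C₁ C₁ᴴ (C₁ * N₁⁻¹ * C₁)).PosSemidef := by
    rw [Matrix.PosDef.fromBlocks₁₁ _ _ hN₁]
    rw [hC₁.eq, sub_self]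
    exact Matrix.PosSemidef.zero
  have h2 : (Matrix.fromBlocks N₂ C₂ C₂ᴴ (C₂ * N₂⁻¹ * C₂)).PosSemidef := by
    rw [Matrix.PosDef.fromBlocks₁₁ _ _ hN₂]
    rw [hC₂.eq, sub_self]
    exact Matrix.PosSemidef.zero
  have hsum : (α • Matrix.fromBlocks N₁ C₁ C₁ᴴ (C₁ * N₁⁻¹ * C₁)
      + (1 - α) • Matrix.fromBlocks N₂ C₂ C₂ᴴ (C₂ * N₂⁻¹ * C₂)).PosSemidef :=
    (smul_posSemidef hα0 h1).add (smul_posSemidef (c := 1 - α) (by linarith) h2)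
  rw [Matrix.fromBlocks_smul, Matrix.fromBlocks_smul, Matrix.fromBlocks_add] at hsum
  have hCherm : (α • C₁ + (1 - α) • C₂)ᴴ = α • C₁ᴴ + (1 - α) • C₂ᴴ := by
    rw [Matrix.conjTranspose_add, Matrix.conjTranspose_smul, Matrix.conjTranspose_smul,
      star_trivial, star_trivial]
  rw [← hCherm] at hsum
  have hherm : (α • C₁ + (1 - α) • C₂).IsHermitian := combo_isHermitian hC₁ hC₂
  have := (Matrix.PosDef.fromBlocks₁₁ (α • C₁ + (1 - α) • C₂) _ hN).mp hsum
  rwa [hherm.eq] at this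


lemma posDef_conj {B M : Matrix (Fin n) (Fin n) ℂ} (hB : B.IsHermitian) (hBu : IsUnit B)
    (hM : M.PosDef) : (B * M * B).PosDef := by
  rw [Matrix.posDef_iff_dotProduct_mulVec]
  constructor
  · have h := isHermitian_conjTranspose_mul_mul B hM.1
    rwa [hB.eq] at h
  · intro x hx
    rw [qf_conj hB]
    apply hM.dotProduct_mulVec_pos
    intro h
    exact hx ((Matrix.mulVec_injective_iff_isUnit.mpr hBu) (h.trans (Matrix.mulVec_zero B).symm))

lemma rep {p : ℝ} (hp0 : 0 < p) (hp1 : p < 1) {X : Matrix (Fin n) (Fin n) ℂ}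
    (hX : X.PosDef) (v : Fin n → ℂ) :
    IntegrableOn (fun t : ℝ => t ^ (-p) *
        (star v ⬝ᵥ ((X + t • (1:Matrix (Fin n) (Fin n) ℂ))⁻¹ *ᵥ v)).re) (Ioi 0) ∧
    (star v ⬝ᵥ (mpow X (-p) *ᵥ v)).re = (Jc p)⁻¹ *
      ∫ t in Ioi (0:ℝ), t ^ (-p) *
        (star v ⬝ᵥ ((X + t • (1:Matrix (Fin n) (Fin n) ℂ))⁻¹ *ᵥ v)).re := by
  set lam : Fin n → ℝ := hX.1.eigenvalues with hlam
  set w : Fin n → ℝ := fun i =>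
    Complex.normSq ((star (hX.1.eigenvectorUnitary : Matrix (Fin n) (Fin n) ℂ) *ᵥ v) i) with hw
  have hlampos : ∀ i, 0 < lam i := hX.eigenvalues_pos
  have hwpos : ∀ i, 0 ≤ w i := fun i => Complex.normSq_nonneg _
  have hqf : ∀ t : ℝ, 0 < t →
      (star v ⬝ᵥ ((X + t • (1:Matrix (Fin n) (Fin n) ℂ))⁻¹ *ᵥ v)).re
        = ∑ i, (lam i + t)⁻¹ * w i := by
    intro t ht
    rw [resolvent_eq hX ht, qf_UDU, Complex.ofReal_re]
  have hEq : EqOn (fun t : ℝ => t ^ (-p) *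
        (star v ⬝ᵥ ((X + t • (1:Matrix (Fin n) (Fin n) ℂ))⁻¹ *ᵥ v)).re)
      (fun t : ℝ => ∑ i, w i * (t ^ (-p) / (lam i + t))) (Ioi 0) := by
    intro t ht
    have ht0 : (0:ℝ) < t := ht
    simp only
    rw [hqf t ht0, Finset.mul_sum]
    refine Finset.sum_congr rfl fun i _ => ?_
    rw [div_eq_mul_inv]
    ring
  have hGint : IntegrableOn (fun t : ℝ => ∑ i, w i * (t ^ (-p) / (lam i + t))) (Ioi 0) := by
    apply MeasureTheory.integrable_finset_sum
    intro i _
    exact (intOn_aux hp0 hp1 (hlampos i)).const_mul _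
  have hint : IntegrableOn (fun t : ℝ => t ^ (-p) *
      (star v ⬝ᵥ ((X + t • (1:Matrix (Fin n) (Fin n) ℂ))⁻¹ *ᵥ v)).re) (Ioi 0) :=
    hGint.congr_fun (fun t ht => (hEq ht).symm) measurableSet_Ioi
  refine ⟨hint, ?_⟩
  have hI : ∫ t in Ioi (0:ℝ), t ^ (-p) *
        (star v ⬝ᵥ ((X + t • (1:Matrix (Fin n) (Fin n) ℂ))⁻¹ *ᵥ v)).re
      = ∑ i, w i * (lam i ^ (-p) * Jc p) := by
    rw [setIntegral_congr_fun measurableSet_Ioi hEq]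
    rw [MeasureTheory.integral_finset_sum _
      (fun i _ => (intOn_aux hp0 hp1 (hlampos i)).const_mul _)]
    refine Finset.sum_congr rfl fun i _ => ?_
    rw [MeasureTheory.integral_const_mul, integral_aux_eq hp0 hp1 (hlampos i)]
  rw [hI, qf_mpow hX, Complex.ofReal_re]
  have hJ : Jc p ≠ 0 := (Jc_pos hp0 hp1).ne'
  rw [Finset.mul_sum]
  refine Finset.sum_congr rfl fun i _ => ?_
  field_simp
  ring

lemma Frep {p : ℝ} (hp0 : 0 < p) (hp1 : p < 1) {M C : Matrix (Fin n) (Fin n) ℂ}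
    (hM : M.PosDef) (hC : C.PosDef) (v : Fin n → ℂ) :
    IntegrableOn (fun t : ℝ => t ^ (-p) *
        (star v ⬝ᵥ ((C * (M + t • C)⁻¹ * C) *ᵥ v)).re) (Ioi 0) ∧
    (star v ⬝ᵥ ((mpow C (1/2) *
        mpow (mpow C (-(1/2)) * M * mpow C (-(1/2))) (-p) * mpow C (1/2)) *ᵥ v)).re
      = (Jc p)⁻¹ * ∫ t in Ioi (0:ℝ), t ^ (-p) *
          (star v ⬝ᵥ ((C * (M + t • C)⁻¹ * C) *ᵥ v)).re := by
  set S := mpow C (1/2) with hS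
  set Sm := mpow C (-(1/2)) with hSm
  have hSh : S.IsHermitian := mpow_isHermitian C _
  have hSmh : Sm.IsHermitian := mpow_isHermitian C _
  have hSSm : S * Sm = 1 := mpow_half_mul_neg_half hC
  have hSmS : Sm * S = 1 := mpow_neg_half_mul_half hC
  have hSS : S * S = C := mpow_half_mul_half hC
  have hSu : IsUnit S := ⟨⟨S, Sm, hSSm, hSmS⟩, rfl⟩
  have hSmu : IsUnit Sm := ⟨⟨Sm, S, hSmS, hSSm⟩, rfl⟩
  have hX : (Sm * M * Sm).PosDef := posDef_conj hSmh hSmu hM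
  set X := Sm * M * Sm with hXdef
  -- matrix identity for each t > 0
  have hkey : ∀ t : ℝ, 0 < t →
      S * (X + t • (1:Matrix (Fin n) (Fin n) ℂ))⁻¹ * S = C * (M + t • C)⁻¹ * C := by
    intro t ht
    have hN : (M + t • C).PosDef := hM.add (smul_posDef ht hC)
    have hNinv : (M + t • C) * (M + t • C)⁻¹ = 1 :=
      Matrix.mul_nonsing_inv _ (Matrix.isUnit_iff_isUnit_det _ |>.mp hN.isUnit)
    have hXt : X + t • (1:Matrix (Fin n) (Fin n) ℂ) = Sm * (M + t • C) * Sm := by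
      have h1 : Sm * (t • C) * Sm = t • (1:Matrix (Fin n) (Fin n) ℂ) := by
        rw [Matrix.mul_smul, Matrix.smul_mul]
        congr 1
        rw [← hSS]
        calc Sm * (S * S) * Sm = (Sm * S) * (S * Sm) := by
              simp only [Matrix.mul_assoc]
          _ = 1 := by rw [hSmS, hSSm, Matrix.one_mul]
      rw [Matrix.mul_add, Matrix.add_mul, h1]
    have hinv : (X + t • (1:Matrix (Fin n) (Fin n) ℂ))⁻¹ = S * (M + t • C)⁻¹ * S := by
      rw [hXt]
      apply Matrix.inv_eq_right_inv
      calc Sm * (M + t • C) * Sm * (S * (M + t • C)⁻¹ * S)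
          = Sm * (M + t • C) * (Sm * S) * (M + t • C)⁻¹ * S := by
            simp only [Matrix.mul_assoc]
        _ = Sm * ((M + t • C) * (M + t • C)⁻¹) * S := by
            rw [hSmS]; simp only [Matrix.mul_assoc, Matrix.one_mul]
        _ = 1 := by rw [hNinv, Matrix.mul_one, hSmS]
    rw [hinv]
    calc S * (S * (M + t • C)⁻¹ * S) * S = (S * S) * (M + t • C)⁻¹ * (S * S) := by
          simp only [Matrix.mul_assoc]
      _ = _ := by rw [hSS]
  -- quadratic form transport
  have hq : ∀ t : ℝ, 0 < t →
      (star v ⬝ᵥ ((C * (M + t • C)⁻¹ * C) *ᵥ v)).re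
        = (star (S *ᵥ v) ⬝ᵥ ((X + t • (1:Matrix (Fin n) (Fin n) ℂ))⁻¹ *ᵥ (S *ᵥ v))).re := by
    intro t ht
    rw [← hkey t ht, qf_conj hSh]
  have hrep := rep hp0 hp1 hX (S *ᵥ v)
  constructor
  · refine hrep.1.congr_fun (fun t ht => ?_) measurableSet_Ioi
    rw [hq t ht]
  · rw [qf_conj hSh, hrep.2]
    congr 1
    refine setIntegral_congr_fun measurableSet_Ioi (fun t ht => ?_)
    rw [hq t ht]


noncomputable def Fm (p : ℝ) (M C : Matrix (Fin n) (Fin n) ℂ) : Matrix (Fin n) (Fin n) ℂ :=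
  mpow C (1 / 2) * mpow (mpow C (-(1 / 2)) * M * mpow C (-(1 / 2))) (-p) * mpow C (1 / 2)

lemma Fm_isHermitian (p : ℝ) (M C : Matrix (Fin n) (Fin n) ℂ) : (Fm p M C).IsHermitian := by
  have h1 := mpow_isHermitian C (1/2)
  have h2 := mpow_isHermitian (mpow C (-(1/2)) * M * mpow C (-(1/2))) (-p)
  rw [Fm, Matrix.IsHermitian, Matrix.conjTranspose_mul, Matrix.conjTranspose_mul,
    h1.eq, h2.eq]
  exact (Matrix.mul_assoc _ _ _).symm

lemma herm_qf_im {D : Matrix (Fin n) (Fin n) ℂ} (hD : D.IsHermitian) (x : Fin n → ℂ) :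
    (star x ⬝ᵥ (D *ᵥ x)).im = 0 := by
  have h : star (star x ⬝ᵥ (D *ᵥ x)) = star x ⬝ᵥ (D *ᵥ x) := by
    conv_lhs => rw [Matrix.star_dotProduct]
    rw [star_star, Matrix.star_mulVec, hD.eq, ← Matrix.dotProduct_mulVec]
  rw [Complex.star_def] at h
  exact Complex.conj_eq_iff_im.mp h

lemma main_convex {p : ℝ} (hp0 : 0 < p) (hp1 : p < 1)
    {M₁ C₁ M₂ C₂ : Matrix (Fin n) (Fin n) ℂ}
    (hM₁ : M₁.PosDef) (hC₁ : C₁.PosDef) (hM₂ : M₂.PosDef) (hC₂ : C₂.PosDef)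
    {α : ℝ} (hα0 : 0 ≤ α) (hα1 : α ≤ 1) :
    ((α • Fm p M₁ C₁ + (1 - α) • Fm p M₂ C₂)
      - Fm p (α • M₁ + (1 - α) • M₂) (α • C₁ + (1 - α) • C₂)).PosSemidef := by
  have hM : (α • M₁ + (1 - α) • M₂).PosDef := combo_posDef hα0 hα1 hM₁ hM₂
  have hC : (α • C₁ + (1 - α) • C₂).PosDef := combo_posDef hα0 hα1 hC₁ hC₂
  have hJ : 0 < Jc p := Jc_pos hp0 hp1
  rw [Matrix.posSemidef_iff_dotProduct_mulVec]
  constructor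
  · exact (combo_isHermitian (Fm_isHermitian p M₁ C₁) (Fm_isHermitian p M₂ C₂)).sub
      (Fm_isHermitian p _ _)
  intro x
  set D := (α • Fm p M₁ C₁ + (1 - α) • Fm p M₂ C₂)
      - Fm p (α • M₁ + (1 - α) • M₂) (α • C₁ + (1 - α) • C₂) with hD
  have hDh : D.IsHermitian :=
    (combo_isHermitian (Fm_isHermitian p M₁ C₁) (Fm_isHermitian p M₂ C₂)).sub
      (Fm_isHermitian p _ _)
  rw [Complex.le_def]
  refine ⟨?_, by rw [Complex.zero_im, herm_qf_im hDh]⟩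
  rw [Complex.zero_re]
  -- expand the quadratic form
  have hexp : (star x ⬝ᵥ (D *ᵥ x)).re
      = α * (star x ⬝ᵥ (Fm p M₁ C₁ *ᵥ x)).re + (1 - α) * (star x ⬝ᵥ (Fm p M₂ C₂ *ᵥ x)).re
        - (star x ⬝ᵥ (Fm p (α • M₁ + (1 - α) • M₂) (α • C₁ + (1 - α) • C₂) *ᵥ x)).re := by
    rw [hD]
    simp only [Matrix.sub_mulVec, Matrix.add_mulVec, Matrix.smul_mulVec,
      dotProduct_sub, dotProduct_add, dotProduct_smul, Complex.sub_re, Complex.add_re,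
      Complex.real_smul, Complex.re_ofReal_mul]
  rw [hexp]
  have h1 := Frep hp0 hp1 hM₁ hC₁ x
  have h2 := Frep hp0 hp1 hM₂ hC₂ x
  have h0 := Frep hp0 hp1 hM hC x
  -- pointwise inequality of integrands
  have hpt : ∀ t ∈ Ioi (0:ℝ),
      t ^ (-p) * (star x ⬝ᵥ (((α • C₁ + (1 - α) • C₂) *
          ((α • M₁ + (1 - α) • M₂) + t • (α • C₁ + (1 - α) • C₂))⁻¹ *
          (α • C₁ + (1 - α) • C₂)) *ᵥ x)).re
        ≤ α * (t ^ (-p) * (star x ⬝ᵥ ((C₁ * (M₁ + t • C₁)⁻¹ * C₁) *ᵥ x)).re)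
          + (1 - α) * (t ^ (-p) * (star x ⬝ᵥ ((C₂ * (M₂ + t • C₂)⁻¹ * C₂) *ᵥ x)).re) := by
    intro t ht
    have ht0 : (0:ℝ) < t := ht
    have hN₁ : (M₁ + t • C₁).PosDef := hM₁.add (smul_posDef ht0 hC₁)
    have hN₂ : (M₂ + t • C₂).PosDef := hM₂.add (smul_posDef ht0 hC₂)
    have hNe : (α • M₁ + (1 - α) • M₂) + t • (α • C₁ + (1 - α) • C₂)
        = α • (M₁ + t • C₁) + (1 - α) • (M₂ + t • C₂) := by
      module
    have hschur := schur_step hα0 hα1 hN₁ hN₂ hC₁.1 hC₂.1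
    have hq := hschur.dotProduct_mulVec_nonneg x
    rw [Complex.le_def] at hq
    have hre := hq.1
    rw [Complex.zero_re] at hre
    have hre' : 0 ≤ α * (star x ⬝ᵥ ((C₁ * (M₁ + t • C₁)⁻¹ * C₁) *ᵥ x)).re
        + (1 - α) * (star x ⬝ᵥ ((C₂ * (M₂ + t • C₂)⁻¹ * C₂) *ᵥ x)).re
        - (star x ⬝ᵥ (((α • C₁ + (1 - α) • C₂) *
            (α • (M₁ + t • C₁) + (1 - α) • (M₂ + t • C₂))⁻¹ *
            (α • C₁ + (1 - α) • C₂)) *ᵥ x)).re := by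
      have hexp2 : (star x ⬝ᵥ (((α • (C₁ * (M₁ + t • C₁)⁻¹ * C₁)
          + (1 - α) • (C₂ * (M₂ + t • C₂)⁻¹ * C₂))
          - (α • C₁ + (1 - α) • C₂) * (α • (M₁ + t • C₁) + (1 - α) • (M₂ + t • C₂))⁻¹ *
            (α • C₁ + (1 - α) • C₂)) *ᵥ x)).re
          = α * (star x ⬝ᵥ ((C₁ * (M₁ + t • C₁)⁻¹ * C₁) *ᵥ x)).re
            + (1 - α) * (star x ⬝ᵥ ((C₂ * (M₂ + t • C₂)⁻¹ * C₂) *ᵥ x)).re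
            - (star x ⬝ᵥ (((α • C₁ + (1 - α) • C₂) *
                (α • (M₁ + t • C₁) + (1 - α) • (M₂ + t • C₂))⁻¹ *
                (α • C₁ + (1 - α) • C₂)) *ᵥ x)).re := by
        simp only [Matrix.sub_mulVec, Matrix.add_mulVec, Matrix.smul_mulVec,
          dotProduct_sub, dotProduct_add, dotProduct_smul, Complex.sub_re, Complex.add_re,
          Complex.real_smul, Complex.re_ofReal_mul]
      rw [← hexp2]
      exact hre
    rw [hNe]
    have htp : (0:ℝ) ≤ t ^ (-p) := Real.rpow_nonneg ht0.le _
    nlinarith [hre']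
  -- integrate
  have hint_rhs : IntegrableOn (fun t : ℝ =>
      α * (t ^ (-p) * (star x ⬝ᵥ ((C₁ * (M₁ + t • C₁)⁻¹ * C₁) *ᵥ x)).re)
      + (1 - α) * (t ^ (-p) * (star x ⬝ᵥ ((C₂ * (M₂ + t • C₂)⁻¹ * C₂) *ᵥ x)).re)) (Ioi 0) :=
    (h1.1.const_mul α).add (h2.1.const_mul (1 - α))
  have hmono := MeasureTheory.setIntegral_mono_on h0.1 hint_rhs measurableSet_Ioi hpt
  rw [MeasureTheory.integral_add (h1.1.const_mul α) (h2.1.const_mul (1 - α)),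
    MeasureTheory.integral_const_mul, MeasureTheory.integral_const_mul] at hmono
  rw [sub_nonneg]
  simp only [Fm]
  rw [h0.2, h1.2, h2.2]
  have hJinv : (0:ℝ) ≤ (Jc p)⁻¹ := inv_nonneg.mpr hJ.le
  calc (Jc p)⁻¹ * ∫ t in Ioi (0:ℝ), t ^ (-p) *
        (star x ⬝ᵥ (((α • C₁ + (1 - α) • C₂) *
          ((α • M₁ + (1 - α) • M₂) + t • (α • C₁ + (1 - α) • C₂))⁻¹ *
          (α • C₁ + (1 - α) • C₂)) *ᵥ x)).re
      ≤ (Jc p)⁻¹ * (α * (∫ t in Ioi (0:ℝ), t ^ (-p) *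
          (star x ⬝ᵥ ((C₁ * (M₁ + t • C₁)⁻¹ * C₁) *ᵥ x)).re)
        + (1 - α) * ∫ t in Ioi (0:ℝ), t ^ (-p) *
          (star x ⬝ᵥ ((C₂ * (M₂ + t • C₂)⁻¹ * C₂) *ᵥ x)).re) :=
        mul_le_mul_of_nonneg_left hmono hJinv
    _ = α * ((Jc p)⁻¹ * ∫ t in Ioi (0:ℝ), t ^ (-p) *
          (star x ⬝ᵥ ((C₁ * (M₁ + t • C₁)⁻¹ * C₁) *ᵥ x)).re)
        + (1 - α) * ((Jc p)⁻¹ * ∫ t in Ioi (0:ℝ), t ^ (-p) *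
          (star x ⬝ᵥ ((C₂ * (M₂ + t • C₂)⁻¹ * C₂) *ᵥ x)).re) := by ring
  -- goal now matches after reordering


end Aux

theorem stmt12 {n : ℕ} (p lam : ℝ) (hp0 : 0 < p) (hp1 : p < 1)
    (hl0 : 0 ≤ lam) (hl1 : lam ≤ 1)
    (A₁ B₁ C₁ A₂ B₂ C₂ : Matrix (Fin n) (Fin n) ℂ)
    (hA₁ : A₁.PosDef) (hB₁ : B₁.PosDef) (hC₁ : C₁.PosDef)
    (hA₂ : A₂.PosDef) (hB₂ : B₂.PosDef) (hC₂ : C₂.PosDef)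
    (α : ℝ) (hα0 : 0 ≤ α) (hα1 : α ≤ 1) :
    ((α • persp lam p A₁ B₁ C₁ + (1 - α) • persp lam p A₂ B₂ C₂) -
      persp lam p (α • A₁ + (1 - α) • A₂) (α • B₁ + (1 - α) • B₂)
        (α • C₁ + (1 - α) • C₂)).PosSemidef := by
  have hM₁ : (lam • A₁ + (1 - lam) • B₁).PosDef := combo_posDef hl0 hl1 hA₁ hB₁
  have hM₂ : (lam • A₂ + (1 - lam) • B₂).PosDef := combo_posDef hl0 hl1 hA₂ hB₂
  have hpersp : ∀ A B C : Matrix (Fin n) (Fin n) ℂ,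
      persp lam p A B C = Fm p (lam • A + (1 - lam) • B) C := fun _ _ _ => rfl
  rw [hpersp, hpersp, hpersp]
  have hM : lam • (α • A₁ + (1 - α) • A₂) + (1 - lam) • (α • B₁ + (1 - α) • B₂)
      = α • (lam • A₁ + (1 - lam) • B₁) + (1 - α) • (lam • A₂ + (1 - lam) • B₂) := by
    module
  rw [hM]
  exact main_convex hp0 hp1 hM₁ hC₁ hM₂ hC₂ hα0 hα1
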